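/- Let f : [0,U) → ℝ with U > 2δ > 0, f(0)=0, f continuous, increasing, and strictly concave on [0,U), thrice differentiable on (0,U), f''' strictly decreasing on (0,2δ), and f'''(w) ≥ 0 on (0,2δ). Then there exists a unique λ̂ ∈ (0,δ) with f'(λ̂) = g₁, and the shift smoothing h(w) := f(w + λ̂) − f(λ̂) satisfies h(w) ≤ g(w) for all w ∈ [0,δ], where g is the δ-smoothing of f. -/

import Mathlib

open Set

-- general unimodality lemma
lemma aux_unimodal (φ φ' φ'' : ℝ → ℝ) (δ : ℝ) (hδ : 0 < δ)
    (hc : ∀ w ∈ Icc (0:ℝ) δ, HasDerivAt φ (φ' w) w)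
    (hc' : ∀ w ∈ Icc (0:ℝ) δ, HasDerivAt φ' (φ'' w) w)
    (h0 : φ 0 = 0) (h0' : φ' 0 = 0) (hend : 0 ≤ φ δ)
    (hconv : ConvexOn ℝ (Icc 0 δ) φ'') (hd2 : φ'' δ < 0) :
    ∀ w ∈ Icc (0:ℝ) δ, 0 ≤ φ w := by
  by_contra h
  push_neg at h
  obtain ⟨w₀, hw₀, hneg⟩ := h
  have hw0 : 0 < w₀ := by
    rcases lt_or_eq_of_le hw₀.1 with h | h
    · exact h
    · exfalso; rw [← h, h0] at hneg; linarith
  have hwδ : w₀ < δ := by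
    rcases lt_or_eq_of_le hw₀.2 with h | h
    · exact h
    · exfalso; rw [h] at hneg; linarith
  -- MVT on [0, w₀] : φ' b < 0
  have sub1 : Icc (0:ℝ) w₀ ⊆ Icc 0 δ := Icc_subset_Icc le_rfl hwδ.le
  have sub2 : Icc w₀ δ ⊆ Icc (0:ℝ) δ := Icc_subset_Icc hw0.le le_rfl
  have contφ : ContinuousOn φ (Icc 0 δ) := fun x hx =>
    (hc x hx).differentiableAt.continuousAt.continuousWithinAt
  have contφ' : ContinuousOn φ' (Icc 0 δ) := fun x hx =>
    (hc' x hx).differentiableAt.continuousAt.continuousWithinAt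
  obtain ⟨b, hb, hbv⟩ := exists_hasDerivAt_eq_slope φ φ' hw0 (contφ.mono sub1)
    (fun x hx => hc x (sub1 (Ioo_subset_Icc_self hx)))
  obtain ⟨c, hc1, hcv⟩ := exists_hasDerivAt_eq_slope φ φ' hwδ (contφ.mono sub2)
    (fun x hx => hc x (sub2 (Ioo_subset_Icc_self hx)))
  have hbneg : φ' b < 0 := by
    rw [hbv, h0]
    apply div_neg_of_neg_of_pos <;> linarith
  have hcpos : 0 < φ' c := by
    rw [hcv]
    apply div_pos <;> linarith
  have hbc : b < c := lt_trans hb.2 hc1.1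
  -- MVT on φ' over [0, b] : φ'' a < 0
  have sub3 : Icc (0:ℝ) b ⊆ Icc 0 δ := Icc_subset_Icc le_rfl (by linarith [hb.2, hc1.2])
  have sub4 : Icc b c ⊆ Icc (0:ℝ) δ := Icc_subset_Icc (by linarith [hb.1]) (by linarith [hc1.2])
  obtain ⟨a, ha, hav⟩ := exists_hasDerivAt_eq_slope φ' φ'' hb.1 (contφ'.mono sub3)
    (fun x hx => hc' x (sub3 (Ioo_subset_Icc_self hx)))
  obtain ⟨d, hd, hdv⟩ := exists_hasDerivAt_eq_slope φ' φ'' hbc (contφ'.mono sub4)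
    (fun x hx => hc' x (sub4 (Ioo_subset_Icc_self hx)))
  have haneg : φ'' a < 0 := by
    rw [hav, h0']
    apply div_neg_of_neg_of_pos <;> linarith [hb.1]
  have hdpos : 0 < φ'' d := by
    rw [hdv]; apply div_pos <;> linarith
  -- convexity contradiction: a < d < δ, φ'' a < 0, φ'' δ < 0 but φ'' d > 0
  have had : a < d := lt_trans ha.2 hd.1
  have hdδ : d < δ := lt_of_lt_of_le hd.2 (by linarith [hc1.2])
  have haI : a ∈ Icc (0:ℝ) δ := ⟨ha.1.le, by linarith [ha.2, hb.2, hc1.2]⟩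
  have hδI : δ ∈ Icc (0:ℝ) δ := ⟨hδ.le, le_rfl⟩
  set t : ℝ := (δ - d) / (δ - a) with ht
  have hden : 0 < δ - a := by linarith
  have ht0 : 0 < t := div_pos (by linarith) hden
  have ht1 : t < 1 := (div_lt_one hden).2 (by linarith)
  have hcomb := hconv.2 haI hδI ht0.le (by linarith : (0:ℝ) ≤ 1 - t) (by ring)
  have heq : t • a + (1 - t) • δ = d := by
    have htd : t * (δ - a) = δ - d := by rw [ht]; exact div_mul_cancel₀ _ hden.ne'
    simp only [smul_eq_mul]; linear_combination -htd
  rw [heq] at hcomb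
  have : t • φ'' a + (1 - t) • φ'' δ < 0 := by
    have h1 : t • φ'' a < 0 := mul_neg_of_pos_of_neg ht0 haneg
    have h2 : (1 - t) • φ'' δ < 0 := mul_neg_of_pos_of_neg (by linarith) hd2
    simpa [smul_eq_mul] using by linarith [h1, h2]
  linarith
open Set

lemma aux_taylor (f f1 f2 f3 : ℝ → ℝ) (x δ : ℝ) (hx : x < δ)
    (hder1 : ∀ w ∈ Icc x δ, HasDerivAt f (f1 w) w)
    (hder2 : ∀ w ∈ Icc x δ, HasDerivAt f1 (f2 w) w)
    (hder3 : ∀ w ∈ Icc x δ, HasDerivAt f2 (f3 w) w)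
    (hpos : ∀ w ∈ Ioo x δ, 0 < f3 w) :
    f x < f δ + f1 δ * (x - δ) + f2 δ * (x - δ)^2/2 := by
  set C : ℝ := (f x - f δ - f1 δ*(x-δ) - f2 δ*(x-δ)^2/2) * 6/(x-δ)^3 with hC
  clear_value C
  have hxδ3 : (x - δ)^3 < 0 := Odd.pow_neg (by decide) (by linarith)
  have hxδ0 : x - δ ≠ 0 := by intro h; rw [h] at hxδ3; norm_num at hxδ3
  set G : ℝ → ℝ := fun t => f t - (f δ + f1 δ*(t-δ) + f2 δ*(t-δ)^2/2 + C*(t-δ)^3/6) with hG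
  set G1 : ℝ → ℝ := fun t => f1 t - (f1 δ + f2 δ*(t-δ) + C*(t-δ)^2/2) with hG1
  set G2 : ℝ → ℝ := fun t => f2 t - (f2 δ + C*(t-δ)) with hG2
  have hGd : ∀ w ∈ Icc x δ, HasDerivAt G (G1 w) w := by
    intro w hw
    have hid : HasDerivAt (fun t:ℝ => t - δ) 1 w := (hasDerivAt_id w).sub_const δ
    have h2 : HasDerivAt (fun t:ℝ => (t-δ)^2) (2*(w-δ)^1*1) w := hid.pow 2
    have h3 : HasDerivAt (fun t:ℝ => (t-δ)^3) (3*(w-δ)^2*1) w := hid.pow 3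
    have hpoly := ((((hasDerivAt_const w (f δ)).add (hid.const_mul (f1 δ))).add
      ((h2.const_mul (f2 δ)).div_const 2)).add ((h3.const_mul C).div_const 6))
    have hres := (hder1 w hw).sub hpoly
    rw [hG1]
    convert hres using 1
    all_goals first | rfl | ring
  have hG1d : ∀ w ∈ Icc x δ, HasDerivAt G1 (G2 w) w := by
    intro w hw
    have hid : HasDerivAt (fun t:ℝ => t - δ) 1 w := (hasDerivAt_id w).sub_const δ
    have h2 : HasDerivAt (fun t:ℝ => (t-δ)^2) (2*(w-δ)^1*1) w := hid.pow 2
    have hpoly := (((hasDerivAt_const w (f1 δ)).add (hid.const_mul (f2 δ))).add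
      ((h2.const_mul C).div_const 2))
    have hres := (hder2 w hw).sub hpoly
    rw [hG2]
    convert hres using 1
    all_goals first | rfl | ring
  have hG2d : ∀ w ∈ Icc x δ, HasDerivAt G2 (f3 w - C) w := by
    intro w hw
    have hid : HasDerivAt (fun t:ℝ => t - δ) 1 w := (hasDerivAt_id w).sub_const δ
    have hpoly := (hasDerivAt_const w (f2 δ)).add (hid.const_mul C)
    have hres := (hder3 w hw).sub hpoly
    convert hres using 1
    all_goals first | rfl | ring
  have hCx : C * (x-δ)^3 = (f x - f δ - f1 δ*(x-δ) - f2 δ*(x-δ)^2/2) * 6 := by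
    rw [hC]; field_simp
  have hGx : G x = 0 := by
    rw [hG]; simp only
    linear_combination (-1/6 : ℝ) * hCx
  have hGδ : G δ = 0 := by simp [hG]
  have contG : ContinuousOn G (Icc x δ) := fun w hw =>
    (hGd w hw).differentiableAt.continuousAt.continuousWithinAt
  obtain ⟨ξ₁, hξ₁, hv1⟩ := exists_hasDerivAt_eq_zero hx contG (hGx.trans hGδ.symm)
    (fun w hw => hGd w (Ioo_subset_Icc_self hw))
  have hG1δ : G1 δ = 0 := by simp [hG1]
  have contG1 : ContinuousOn G1 (Icc ξ₁ δ) := fun w hw =>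
    (hG1d w (Icc_subset_Icc hξ₁.1.le le_rfl hw)).differentiableAt.continuousAt.continuousWithinAt
  obtain ⟨ξ₂, hξ₂, hv2⟩ := exists_hasDerivAt_eq_zero hξ₁.2 contG1 (hv1.trans hG1δ.symm)
    (fun w hw => hG1d w (Icc_subset_Icc hξ₁.1.le le_rfl (Ioo_subset_Icc_self hw)))
  have hG2δ : G2 δ = 0 := by simp [hG2]
  have sub2 : Icc ξ₂ δ ⊆ Icc x δ := Icc_subset_Icc (by linarith [hξ₁.1, hξ₂.1]) le_rfl
  have contG2 : ContinuousOn G2 (Icc ξ₂ δ) := fun w hw =>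
    (hG2d w (sub2 hw)).differentiableAt.continuousAt.continuousWithinAt
  obtain ⟨ξ₃, hξ₃, hv3⟩ := exists_hasDerivAt_eq_zero hξ₂.2 contG2 (hv2.trans hG2δ.symm)
    (fun w hw => hG2d w (sub2 (Ioo_subset_Icc_self hw)))
  have hCpos : 0 < C := by
    have hmem : ξ₃ ∈ Ioo x δ := ⟨by linarith [hξ₁.1, hξ₂.1, hξ₃.1], hξ₃.2⟩
    have := hpos ξ₃ hmem
    have hEq : f3 ξ₃ = C := by linarith [hv3]
    linarith
  have hnum : f x - f δ - f1 δ*(x-δ) - f2 δ*(x-δ)^2/2 < 0 := by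
    nlinarith [hCx, mul_pos_of_neg_of_neg hxδ3 (neg_neg_iff_pos.mpr hCpos)]
  linarith

set_option maxHeartbeats 1000000 in


theorem stmt_18 (f : ℝ → ℝ) (U : EReal) (δ : ℝ) (hδ : 0 < δ)
    (hU : ((2 * δ : ℝ) : EReal) < U) (hf0 : f 0 = 0)
    (hcont : ContinuousOn f {w : ℝ | 0 ≤ w ∧ (w : EReal) < U})
    (hmono : StrictMonoOn f {w : ℝ | 0 ≤ w ∧ (w : EReal) < U})
    (hconc : StrictConcaveOn ℝ {w : ℝ | 0 ≤ w ∧ (w : EReal) < U} f)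
    (hdiff : ∀ w : ℝ, 0 < w → (w : EReal) < U → DifferentiableAt ℝ f w ∧
      DifferentiableAt ℝ (deriv f) w ∧ DifferentiableAt ℝ (deriv (deriv f)) w)
    (hanti : StrictAntiOn (deriv (deriv (deriv f))) (Set.Ioo 0 (2 * δ)))
    (hnonneg : ∀ w ∈ Set.Ioo (0:ℝ) (2 * δ), 0 ≤ deriv (deriv (deriv f)) w)
    (g1 : ℝ) (hg1 : g1 = 3 * f δ / δ - 2 * deriv f δ + δ * deriv (deriv f) δ / 2)
    (g : ℝ → ℝ)
    (hg : g = fun w =>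
      g1 * w +
      (-6 * f δ / δ ^ 2 + 6 * deriv f δ / δ - 2 * deriv (deriv f) δ) / 2 * w ^ 2 +
      (6 * f δ / δ ^ 3 - 6 * deriv f δ / δ ^ 2 + 3 * deriv (deriv f) δ / δ) / 6 * w ^ 3)
    (L : EReal)
    (hL : Filter.Tendsto (fun w : ℝ => (((deriv f w : ℝ)) : EReal))
      (nhdsWithin 0 (Set.Ioi 0)) (nhds L))
    (hLg : (g1 : EReal) < L) :
    (∃! l : ℝ, l ∈ Set.Ioo 0 δ ∧ deriv f l = g1) ∧
    ∀ l ∈ Set.Ioo (0:ℝ) δ, deriv f l = g1 →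
      ∀ w ∈ Set.Icc (0:ℝ) δ, f (w + l) - f l ≤ g w := by
  have hδ2 : (0:ℝ) < 2 * δ := by linarith
  set f1 := deriv f with hf1def
  set f2 := deriv (deriv f) with hf2def
  set f3 := deriv (deriv (deriv f)) with hf3def
  set S : Set ℝ := {w : ℝ | 0 ≤ w ∧ (w : EReal) < U} with hSdef
  have hcoe : ∀ w : ℝ, w < 2 * δ → (w : EReal) < U :=
    fun w h => lt_trans (EReal.coe_lt_coe_iff.2 h) hU
  have hmem : ∀ w : ℝ, 0 ≤ w → w < 2 * δ → w ∈ S := fun w h1 h2 => ⟨h1, hcoe w h2⟩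
  have hsub : Set.Ioo (0:ℝ) (2 * δ) ⊆ S := fun w hw => hmem w hw.1.le hw.2
  have hd : ∀ w ∈ Set.Ioo (0:ℝ) (2 * δ), DifferentiableAt ℝ f w ∧
      DifferentiableAt ℝ f1 w ∧ DifferentiableAt ℝ f2 w :=
    fun w hw => hdiff w hw.1 (hcoe w hw.2)
  have h3pos : ∀ w ∈ Set.Ioo (0:ℝ) (2 * δ), 0 < f3 w := by
    intro w hw
    have hw' : (w + 2 * δ) / 2 ∈ Set.Ioo (0:ℝ) (2 * δ) := ⟨by linarith [hw.1], by linarith [hw.2]⟩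
    have h1 := hanti hw hw' (by linarith [hw.2])
    have h2 := hnonneg _ hw'
    linarith
  have hf2mono : StrictMonoOn f2 (Set.Ioo 0 (2 * δ)) := by
    apply strictMonoOn_of_deriv_pos (convex_Ioo 0 (2 * δ))
    · exact fun w hw => ((hd w hw).2.2).continuousAt.continuousWithinAt
    · rw [interior_Ioo]; exact fun w hw => h3pos w hw
  have hf1anti : StrictAntiOn f1 (Set.Ioo 0 (2 * δ)) :=
    (hconc.subset hsub (convex_Ioo _ _)).strictAntiOn_deriv (fun w hw => (hd w hw).1)
  have memδ : δ ∈ Set.Ioo (0:ℝ) (2 * δ) := ⟨hδ, by linarith⟩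
  have memS0 : (0:ℝ) ∈ S := hmem 0 le_rfl (by linarith)
  have memSδ : δ ∈ S := hmem δ hδ.le (by linarith)
  -- slope fact: f1 δ * δ < f δ
  have hPδ : f1 δ * δ < f δ := by
    have h := hconc.deriv_lt_slope memS0 memSδ hδ (hd δ memδ).1
    rw [slope_def_field, hf0, sub_zero, sub_zero] at h
    exact (lt_div_iff₀ hδ).1 h
  -- Taylor-type strict inequality at δ/2
  have hIccsub : Set.Icc (δ/2) δ ⊆ Set.Ioo (0:ℝ) (2 * δ) :=
    fun w hw => ⟨by linarith [hw.1], by linarith [hw.2]⟩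
  have htay : f (δ/2) < f δ + f1 δ * (δ/2 - δ) + f2 δ * (δ/2 - δ)^2 / 2 := by
    apply aux_taylor f f1 f2 f3 (δ/2) δ (by linarith)
    · exact fun w hw => ((hd w (hIccsub hw)).1).hasDerivAt
    · exact fun w hw => ((hd w (hIccsub hw)).2.1).hasDerivAt
    · exact fun w hw => ((hd w (hIccsub hw)).2.2).hasDerivAt
    · exact fun w hw => h3pos w (hIccsub (Set.Ioo_subset_Icc_self hw))
  have hmid : (1/2 : ℝ) * f δ ≤ f (δ/2) := by
    have hcomb := hconc.concaveOn.2 memS0 memSδ (by norm_num : (0:ℝ) ≤ 1/2)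
      (by norm_num : (0:ℝ) ≤ 1/2) (by norm_num)
    have hpt : (1/2 : ℝ) • (0:ℝ) + (1/2 : ℝ) • δ = δ/2 := by rw [smul_zero, zero_add, smul_eq_mul]; ring
    rw [hpt] at hcomb
    simpa [hf0, smul_eq_mul] using hcomb
  have hkey : 0 < 6 * f δ - 6 * (f1 δ * δ) + f2 δ * δ^2 := by nlinarith [htay, hmid, hPδ]
  have hg1δ : f1 δ < g1 := by
    have hrep : g1 - f1 δ = (6 * f δ - 6 * (f1 δ * δ) + f2 δ * δ^2) / (2 * δ) := by
      rw [hg1]; field_simp; ring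
    have := div_pos hkey (by linarith : (0:ℝ) < 2 * δ)
    linarith [hrep ▸ this]
  -- existence of l
  have hev1 : ∀ᶠ w in nhdsWithin (0:ℝ) (Set.Ioi 0), (g1 : EReal) < ((f1 w : ℝ) : EReal) :=
    hL.eventually_const_lt hLg
  have hev2 : Set.Ioo (0:ℝ) δ ∈ nhdsWithin (0:ℝ) (Set.Ioi 0) :=
    Ioo_mem_nhdsGT_of_mem ⟨le_rfl, hδ⟩
  obtain ⟨a, hag, haI⟩ := (hev1.and (Filter.eventually_of_mem hev2 (fun x hx => hx))).exists
  have hag' : g1 < f1 a := EReal.coe_lt_coe_iff.1 hag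
  have hIccsub2 : Set.Icc a δ ⊆ Set.Ioo (0:ℝ) (2 * δ) :=
    fun w hw => ⟨lt_of_lt_of_le haI.1 hw.1, lt_of_le_of_lt hw.2 (by linarith)⟩
  have contf1 : ContinuousOn f1 (Set.Icc a δ) :=
    fun w hw => ((hd w (hIccsub2 hw)).2.1).continuousAt.continuousWithinAt
  obtain ⟨l, hlI, hlv⟩ := intermediate_value_Ioo' haI.2.le contf1 ⟨hg1δ, hag'⟩
  have hlmem : l ∈ Set.Ioo (0:ℝ) δ := ⟨lt_trans haI.1 hlI.1, hlI.2⟩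
  constructor
  · refine ⟨l, ⟨hlmem, hlv⟩, ?_⟩
    rintro y ⟨hyI, hyv⟩
    refine hf1anti.injOn ⟨hyI.1, by linarith [hyI.2]⟩ ⟨hlmem.1, by linarith [hlmem.2]⟩ ?_
    rw [hyv, hlv]
  -- part 2
  clear hlv hlmem hlI l hag hag' haI a hev1 hev2 contf1 hIccsub2
  intro l hlI hlv w hw
  set A : ℝ := -6 * f δ / δ ^ 2 + 6 * f1 δ / δ - 2 * f2 δ with hAdef
  set B : ℝ := 6 * f δ / δ ^ 3 - 6 * f1 δ / δ ^ 2 + 3 * f2 δ / δ with hBdef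
  have memwl : ∀ v ∈ Set.Icc (0:ℝ) δ, v + l ∈ Set.Ioo (0:ℝ) (2 * δ) :=
    fun v hv => ⟨by linarith [hv.1, hlI.1], by linarith [hv.2, hlI.2]⟩
  set φ : ℝ → ℝ := fun t => (g1 * t + A/2 * t^2 + B/6 * t^3) - (f (t + l) - f l) with hφdef
  set φ' : ℝ → ℝ := fun t => (g1 + A * t + B/2 * t^2) - f1 (t + l) with hφ'def
  set φ'' : ℝ → ℝ := fun t => (A + B * t) - f2 (t + l) with hφ''def
  have hshift : ∀ (F G : ℝ → ℝ), (∀ v ∈ Set.Icc (0:ℝ) δ, HasDerivAt F (G (v+l)) (v+l)) →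
      ∀ v ∈ Set.Icc (0:ℝ) δ, HasDerivAt (fun t => F (t + l)) (G (v + l)) v := by
    intro F G hF v hv
    have := HasDerivAt.comp v (hF v hv) ((hasDerivAt_id v).add_const l)
    simpa [Function.comp_def] using this
  have hsf : ∀ v ∈ Set.Icc (0:ℝ) δ, HasDerivAt (fun t => f (t + l)) (f1 (v + l)) v :=
    hshift f f1 (fun v hv => ((hd _ (memwl v hv)).1).hasDerivAt)
  have hsf1 : ∀ v ∈ Set.Icc (0:ℝ) δ, HasDerivAt (fun t => f1 (t + l)) (f2 (v + l)) v :=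
    hshift f1 f2 (fun v hv => ((hd _ (memwl v hv)).2.1).hasDerivAt)
  have hsf2 : ∀ v ∈ Set.Icc (0:ℝ) δ, HasDerivAt (fun t => f2 (t + l)) (f3 (v + l)) v :=
    hshift f2 f3 (fun v hv => ((hd _ (memwl v hv)).2.2).hasDerivAt)
  have hc : ∀ v ∈ Set.Icc (0:ℝ) δ, HasDerivAt φ (φ' v) v := by
    intro v hv
    have hpoly : HasDerivAt (fun t : ℝ => g1 * t + A/2 * t^2 + B/6 * t^3)
        (g1 + A * v + B/2 * v^2) v := by
      have h1 : HasDerivAt (fun t : ℝ => g1 * t) (g1 * 1) v := (hasDerivAt_id v).const_mul g1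
      have h2 := (hasDerivAt_pow 2 v).const_mul (A/2)
      have h3 := (hasDerivAt_pow 3 v).const_mul (B/6)
      convert (h1.add h2).add h3 using 1
      all_goals first | rfl | (push_cast; ring)
    exact hpoly.sub ((hsf v hv).sub_const (f l))
  have hc' : ∀ v ∈ Set.Icc (0:ℝ) δ, HasDerivAt φ' (φ'' v) v := by
    intro v hv
    have hpoly : HasDerivAt (fun t : ℝ => g1 + A * t + B/2 * t^2) (A + B * v) v := by
      have h1 : HasDerivAt (fun t : ℝ => A * t) (A * 1) v := (hasDerivAt_id v).const_mul A
      have h2 := (hasDerivAt_pow 2 v).const_mul (B/2)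
      convert ((hasDerivAt_const v g1).add h1).add h2 using 1
      all_goals first | rfl | (push_cast; ring)
    exact hpoly.sub (hsf1 v hv)
  have hc'' : ∀ v ∈ Set.Icc (0:ℝ) δ, HasDerivAt φ'' (B - f3 (v + l)) v := by
    intro v hv
    have hpoly : HasDerivAt (fun t : ℝ => A + B * t) B v := by
      have h1 : HasDerivAt (fun t : ℝ => B * t) (B * 1) v := (hasDerivAt_id v).const_mul B
      convert (hasDerivAt_const v A).add h1 using 1
      all_goals first | rfl | ring
    exact hpoly.sub (hsf2 v hv)
  have h0 : φ 0 = 0 := by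
    simp only [hφdef]; simp
  have h0' : φ' 0 = 0 := by
    simp only [hφ'def]; simp [hlv]
  have hend'' : φ'' δ < 0 := by
    have hABδ : A + B * δ = f2 δ := by rw [hAdef, hBdef]; field_simp; ring
    have h2lt : f2 δ < f2 (δ + l) := hf2mono memδ ⟨by linarith [hlI.1], by linarith [hlI.2]⟩
      (by linarith [hlI.1])
    show (A + B * δ) - f2 (δ + l) < 0
    rw [hABδ]; linarith
  have hend : 0 ≤ φ δ := by
    have hgδ : g1 * δ + A/2 * δ^2 + B/6 * δ^3 = f δ := by
      rw [hg1, hAdef, hBdef]; field_simp; ring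
    have memSδl : δ + l ∈ S := hmem _ (by linarith [hlI.1]) (by linarith [hlI.2])
    have hsum : (0:ℝ) < δ + l := by linarith [hlI.1]
    have hne : δ + l ≠ 0 := hsum.ne'
    have c1 := hconc.concaveOn.2 memS0 memSδl
      (le_of_lt (div_pos hlI.1 hsum)) (le_of_lt (div_pos hδ hsum))
      (by field_simp; try ring)
    have c2 := hconc.concaveOn.2 memS0 memSδl
      (le_of_lt (div_pos hδ hsum)) (le_of_lt (div_pos hlI.1 hsum))
      (by field_simp; try ring)
    have hpt1 : (l/(δ+l)) • (0:ℝ) + (δ/(δ+l)) • (δ + l) = δ := by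
      rw [smul_zero, zero_add, smul_eq_mul, div_mul_cancel₀ _ hne]
    have hpt2 : (δ/(δ+l)) • (0:ℝ) + (l/(δ+l)) • (δ + l) = l := by
      rw [smul_zero, zero_add, smul_eq_mul, div_mul_cancel₀ _ hne]
    rw [hpt1, hf0, smul_zero, zero_add, smul_eq_mul] at c1
    rw [hpt2, hf0, smul_zero, zero_add, smul_eq_mul] at c2
    have hsplit : δ/(δ+l) * f (δ + l) + l/(δ+l) * f (δ + l) = f (δ + l) := by
      field_simp; try ring
    show 0 ≤ (g1 * δ + A/2 * δ^2 + B/6 * δ^3) - (f (δ + l) - f l)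
    rw [hgδ]
    linarith
  have hconv : ConvexOn ℝ (Set.Icc 0 δ) φ'' := by
    apply MonotoneOn.convexOn_of_deriv (convex_Icc 0 δ)
    · exact fun v hv => (hc'' v hv).differentiableAt.continuousAt.continuousWithinAt
    · rw [interior_Icc]
      exact fun v hv => ((hc'' v (Set.Ioo_subset_Icc_self hv)).differentiableAt).differentiableWithinAt
    · rw [interior_Icc]
      intro x hx y hy hxy
      rw [(hc'' x (Set.Ioo_subset_Icc_self hx)).deriv, (hc'' y (Set.Ioo_subset_Icc_self hy)).deriv]
      rcases eq_or_lt_of_le hxy with h | h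
      · rw [h]
      · have := hanti (memwl x (Set.Ioo_subset_Icc_self hx)) (memwl y (Set.Ioo_subset_Icc_self hy))
          (by linarith)
        linarith
  have hfinal := aux_unimodal φ φ' φ'' δ hδ hc hc' h0 h0' hend hconv hend'' w hw
  simp only [hφdef] at hfinal
  simp only [hg]
  linarith
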